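/- Determinacy of all Borel games with taboos is level-by-level equivalent to determinacy of Borel games on pruned game trees: in particular, if for every pruned game tree T' and every A' ⊆ [T'] in the Borel class Γ the game G(A';T') is determined, then for every game tree with taboos T and every A ⊆ [T] in Γ, the game G(A;T) is determined. -/

import Mathlib

universe u v

/-- A game tree: a nonempty set of finite sequences closed under initial segments. -/
def IsGameTree {X : Type*} (T : Set (List X)) : Prop :=
  T.Nonempty ∧ ∀ ⦃p q : List X⦄, q ∈ T → p <+: q → p ∈ T

/-- A terminal position: a position with no proper extension in the tree. -/
def IsTerminal {X : Type*} (T : Set (List X)) (p : List X) : Prop :=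
  p ∈ T ∧ ∀ a : X, p ++ [a] ∉ T

/-- A pruned game tree has no terminal positions. -/
def IsPruned {X : Type*} (T : Set (List X)) : Prop :=
  ∀ p ∈ T, ∃ a : X, p ++ [a] ∈ T

/-- The game subtree at a position `p`. -/
def subtreeAt {X : Type*} (T : Set (List X)) (p : List X) : Set (List X) :=
  {q | q ∈ T ∧ (q <+: p ∨ p <+: q)}

/-- The initial segment of length `n` of an infinite sequence. -/
def prefixFn {X : Type*} (x : ℕ → X) (n : ℕ) : List X :=
  List.ofFn fun i : Fin n => x i

/-- The set of infinite branches through a tree. -/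
def body {X : Type*} (T : Set (List X)) : Set (ℕ → X) :=
  {x | ∀ n, prefixFn x n ∈ T}

/-- `Turn pl n` holds when it is player `pl`'s turn to move at a position of length `n`
(`true` is player I, moving at even stages, `false` is player II). -/
def Turn (pl : Bool) (n : ℕ) : Prop := if pl then Even n else Odd n

/-- A position is consistent with a strategy `σ` for player `pl` if all the moves of
player `pl` along it follow `σ`. -/
def PosConsistent {X : Type*} (pl : Bool) (σ : List X → X) (p : List X) : Prop :=
  ∀ (k : ℕ) (h : k < p.length), Turn pl k → p.get ⟨k, h⟩ = σ (p.take k)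

/-- An infinite branch is consistent with a strategy `σ` for player `pl` if all the moves of
player `pl` along it follow `σ`. -/
def BranchConsistent {X : Type*} (pl : Bool) (σ : List X → X) (x : ℕ → X) : Prop :=
  ∀ k : ℕ, Turn pl k → x k = σ (prefixFn x k)

/-- `σ` is a (legal) strategy for player `pl` in `T`: at any nonterminal position of `T`
consistent with `σ` where it is `pl`'s turn, it produces a legal move. -/
def IsStrategy {X : Type*} (T : Set (List X)) (pl : Bool) (σ : List X → X) : Prop :=
  ∀ p ∈ T, ¬ IsTerminal T p → Turn pl p.length → PosConsistent pl σ p →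
    p ++ [σ p] ∈ T


/-- A game tree with taboos: a game tree together with a partition of its terminal
positions into taboos for player I and taboos for player II. -/
structure TabooTree (X : Type*) where
  T : Set (List X)
  isTree : IsGameTree T
  tabooI : Set (List X)
  tabooII : Set (List X)
  tabooI_terminal : ∀ p ∈ tabooI, IsTerminal T p
  tabooII_terminal : ∀ p ∈ tabooII, IsTerminal T p
  taboo_disjoint : Disjoint tabooI tabooII
  taboo_cover : ∀ p, IsTerminal T p → p ∈ tabooI ∪ tabooII

/-- `σ` is a winning strategy for player I in the game with payoff `A` on the tree `T`
whose taboos for player II are `tabooII`: every finite play (terminal position)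
consistent with `σ` is a taboo for II, and every infinite play consistent with `σ` is in `A`. -/
def WinsI {X : Type*} (T tabooII : Set (List X)) (A : Set (ℕ → X)) (σ : List X → X) : Prop :=
  IsStrategy T true σ ∧
  (∀ p, IsTerminal T p → PosConsistent true σ p → p ∈ tabooII) ∧
  (∀ x ∈ body T, BranchConsistent true σ x → x ∈ A)

/-- `τ` is a winning strategy for player II: every finite play consistent with `τ` is a
taboo for I, and every infinite play consistent with `τ` is outside `A`. -/
def WinsII {X : Type*} (T tabooI : Set (List X)) (A : Set (ℕ → X)) (τ : List X → X) : Prop :=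
  IsStrategy T false τ ∧
  (∀ p, IsTerminal T p → PosConsistent false τ p → p ∈ tabooI) ∧
  (∀ x ∈ body T, BranchConsistent false τ x → x ∉ A)

/-- Determinacy of the game on tree `T` with taboos `tI`, `tII` and payoff `A`. -/
def DeterminedOn {X : Type*} (T tI tII : Set (List X)) (A : Set (ℕ → X)) : Prop :=
  (∃ σ, WinsI T tII A σ) ∨ (∃ τ, WinsII T tI A τ)

/-- Determinacy of the game with taboos `G(A; M)`. -/
def Determined {X : Type*} (M : TabooTree X) (A : Set (ℕ → X)) : Prop :=
  DeterminedOn M.T M.tabooI M.tabooII A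


/-! ### Auxiliary development -/

section AuxDev

variable {X : Type*}

lemma turn_not {pl : Bool} {n : ℕ} : Turn (!pl) n ↔ ¬ Turn pl n := by
  cases pl
  · simp only [Bool.not_false, Turn, if_true, if_false]
    exact Nat.not_odd_iff_even.symm
  · simp only [Bool.not_true, Turn, if_true, if_false]
    exact Nat.not_even_iff_odd.symm

lemma turn_em (pl : Bool) (n : ℕ) : Turn pl n ∨ Turn (!pl) n := by
  cases pl <;> rcases Nat.even_or_odd n with hn | hn <;> simp [Turn, hn]

lemma prefixFn_length (x : ℕ → X) (n : ℕ) : (prefixFn x n).length = n := by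
  simp [prefixFn]

lemma prefixFn_getElem (x : ℕ → X) {n k : ℕ} (h : k < (prefixFn x n).length) :
    (prefixFn x n)[k] = x k := by
  simp [prefixFn]

lemma prefixFn_zero (x : ℕ → X) : prefixFn x 0 = [] := by simp [prefixFn]

lemma prefixFn_succ (x : ℕ → X) (n : ℕ) :
    prefixFn x (n + 1) = prefixFn x n ++ [x n] := by
  rw [prefixFn, List.ofFn_succ', List.concat_eq_append]
  rfl

lemma prefixFn_take (x : ℕ → X) {k n : ℕ} (h : k ≤ n) :
    (prefixFn x n).take k = prefixFn x k := by
  apply List.ext_getElem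
  · simp [prefixFn]; omega
  · intro i h1 h2
    have hi : i < n := by simp [prefixFn] at h1; omega
    simp [List.getElem_take, prefixFn]

lemma nil_mem_of_tree {T : Set (List X)} (hT : IsGameTree T) : [] ∈ T := by
  obtain ⟨q, hq⟩ := hT.1
  exact hT.2 hq List.nil_prefix

lemma take_mem_of_tree {T : Set (List X)} (hT : IsGameTree T) {q : List X}
    (hq : q ∈ T) (n : ℕ) : q.take n ∈ T :=
  hT.2 hq (List.take_prefix n q)

lemma lt_length_of_prefix_ne {p q : List X} (hpre : p <+: q) (hne : q ≠ p) :
    p.length < q.length :=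
  lt_of_le_of_ne hpre.length_le (fun hl => hne (hpre.eq_of_length hl).symm)

lemma prefix_snoc_of_prefix_lt {p q : List X} (hpre : p <+: q)
    (hlt : p.length < q.length) : p ++ [q[p.length]] <+: q := by
  have h1 : p = q.take p.length := List.prefix_iff_eq_take.1 hpre
  have h2 : p ++ [q[p.length]] = q.take (p.length + 1) := by
    rw [List.take_succ, List.getElem?_eq_getElem hlt, ← h1]
    rfl
  rw [h2]
  exact List.take_prefix _ _

lemma eq_of_terminal_prefix {T : Set (List X)} (hT : IsGameTree T) {p q : List X}
    (hp : IsTerminal T p) (hq : q ∈ T) (hpre : p <+: q) : q = p := by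
  by_contra hne
  have hlt := lt_length_of_prefix_ne hpre hne
  exact hp.2 q[p.length] (hT.2 hq (prefix_snoc_of_prefix_lt hpre hlt))

/-- Consistency of the moves of `pl` with `σ` from position `p` onwards. -/
def ConsAfter (pl : Bool) (σ : List X → X) (p q : List X) : Prop :=
  ∀ k (hk : k < q.length), p.length ≤ k → Turn pl k → q[k] = σ (q.take k)

/-- Consistency of the moves of `pl` along a branch with `σ` from position `p` onwards. -/
def BrConsAfter (pl : Bool) (σ : List X → X) (p : List X) (x : ℕ → X) : Prop :=
  ∀ k, p.length ≤ k → Turn pl k → x k = σ (prefixFn x k)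

lemma posConsistent_iff {pl : Bool} {σ : List X → X} {q : List X} :
    PosConsistent pl σ q ↔ ∀ k (hk : k < q.length), Turn pl k → q[k] = σ (q.take k) := by
  unfold PosConsistent
  simp [List.get_eq_getElem]

/-- Player `pl` can force the play from `p` into the set `tab` (of terminal positions). -/
inductive Forces (T tab : Set (List X)) (pl : Bool) : List X → Prop
  | base {p : List X} (h : p ∈ tab) : Forces T tab pl p
  | mine {p : List X} {a : X} (hp : p ∈ T) (ht : Turn pl p.length)
      (ha : p ++ [a] ∈ T) (h : Forces T tab pl (p ++ [a])) : Forces T tab pl p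
  | yours {p : List X} (hp : p ∈ T) (ht : Turn (!pl) p.length)
      (hne : ∃ a, p ++ [a] ∈ T)
      (h : ∀ a, p ++ [a] ∈ T → Forces T tab pl (p ++ [a])) : Forces T tab pl p

/-- A local winning condition: from `p` on, `σ` is legal, every consistent terminal
extension lies in `tab`, and there is no consistent infinite branch through `p`. -/
def WinFrom (T tab : Set (List X)) (pl : Bool) (p : List X) (σ : List X → X) : Prop :=
  (∀ q ∈ T, p <+: q → ¬ IsTerminal T q → Turn pl q.length → ConsAfter pl σ p q →
    q ++ [σ q] ∈ T) ∧
  (∀ q, IsTerminal T q → p <+: q → ConsAfter pl σ p q → q ∈ tab) ∧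
  (∀ x ∈ body T, prefixFn x p.length = p → BrConsAfter pl σ p x → False)

theorem Forces.winFrom [Nonempty X] {T tab : Set (List X)} {pl : Bool} {p : List X}
    (hT : IsGameTree T) (htab : ∀ q ∈ tab, IsTerminal T q)
    (h : Forces T tab pl p) : ∃ σ, WinFrom T tab pl p σ := by
  classical
  induction h with
  | @base p hptab =>
    have hterm := htab _ hptab
    refine ⟨fun _ => Classical.arbitrary X, ?_, ?_, ?_⟩
    · intro q hq hpre hnterm _ _
      have hqp : q = p := eq_of_terminal_prefix hT hterm hq hpre
      rw [hqp] at hnterm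
      exact absurd hterm hnterm
    · intro q hterm' hpre _
      have hqp : q = p := eq_of_terminal_prefix hT hterm hterm'.1 hpre
      rw [hqp]; exact hptab
    · intro x hx hpfx _
      have h1 : prefixFn x (p.length + 1) ∈ T := hx _
      rw [prefixFn_succ, hpfx] at h1
      exact hterm.2 _ h1
  | @mine p a hp ht ha _ ih =>
    obtain ⟨σc, W1c, W2c, W3c⟩ := ih
    refine ⟨fun q => if q = p then a else σc q, ?_, ?_, ?_⟩ <;>
      [skip; skip; skip]
    all_goals
      have hσp : (fun q => if q = p then a else σc q) p = a := if_pos rfl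
    all_goals
      have hσ : ∀ q, q ≠ p → (fun q => if q = p then a else σc q) q = σc q :=
        fun q hq => if_neg hq
    all_goals
      have hclen : (p ++ [a]).length = p.length + 1 := by simp
    all_goals
      have key : ∀ q, p <+: q → q ≠ p →
          ConsAfter pl (fun q => if q = p then a else σc q) p q →
          (p ++ [a]) <+: q ∧ ConsAfter pl σc (p ++ [a]) q := by
        intro q hpre hne hca
        have hlt := lt_length_of_prefix_ne hpre hne
        have h1 : p = q.take p.length := List.prefix_iff_eq_take.1 hpre
        have hget : q[p.length] = a := by
          have e := hca p.length hlt le_rfl ht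
          rw [e, ← h1, hσp]
        have hpre2 : p ++ [a] <+: q := by
          rw [← hget]; exact prefix_snoc_of_prefix_lt hpre hlt
        refine ⟨hpre2, ?_⟩
        intro k hk hle ht'
        rw [hclen] at hle
        have e := hca k hk (by omega) ht'
        rw [e]
        apply hσ
        intro hEq
        have := congrArg List.length hEq
        simp [List.length_take] at this
        omega
    · -- W1
      intro q hq hpre hnterm hturn hca
      by_cases hqp : q = p
      · subst hqp
        simpa [hσp] using ha
      · obtain ⟨hpre2, hca2⟩ := key q hpre hqp hca
        rw [hσ q hqp]
        exact W1c q hq hpre2 hnterm hturn hca2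
    · -- W2
      intro q hterm hpre hca
      have hqp : q ≠ p := by
        intro hEq; subst hEq; exact hterm.2 a ha
      obtain ⟨hpre2, hca2⟩ := key q hpre hqp hca
      exact W2c q hterm hpre2 hca2
    · -- W3
      intro x hx hpfx hbc
      have h1 : x p.length = a := by
        have e := hbc p.length le_rfl ht
        rw [e, hpfx, hσp]
      have hpfx2 : prefixFn x (p ++ [a]).length = p ++ [a] := by
        rw [hclen, prefixFn_succ, hpfx, h1]
      apply W3c x hx hpfx2
      intro k hle hturn
      rw [hclen] at hle
      have e := hbc k (by omega) hturn
      rw [e]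
      apply hσ
      intro hEq
      have := congrArg List.length hEq
      rw [prefixFn_length] at this
      omega
  | @yours p hp ht hne _ ih =>
    have hchoice : ∀ a : X, ∃ σa, p ++ [a] ∈ T → WinFrom T tab pl (p ++ [a]) σa := by
      intro a
      by_cases hmem : p ++ [a] ∈ T
      · obtain ⟨σa, hσa⟩ := ih a hmem
        exact ⟨σa, fun _ => hσa⟩
      · exact ⟨fun _ => Classical.arbitrary X, fun h' => absurd h' hmem⟩
    choose f hf using hchoice
    refine ⟨fun q => if h : p.length < q.length ∧ p <+: q
        then f (q[p.length]'h.1) q else Classical.arbitrary X, ?_, ?_, ?_⟩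
    all_goals
      have hσ : ∀ q (h1 : p.length < q.length), p <+: q →
          (fun q => if h : p.length < q.length ∧ p <+: q
            then f (q[p.length]'h.1) q else Classical.arbitrary X) q
          = f (q[p.length]'h1) q := by
        intro q h1 h2
        simp only []
        rw [dif_pos ⟨h1, h2⟩]
    all_goals
      have key : ∀ q, p <+: q → q ≠ p →
          ConsAfter pl (fun q => if h : p.length < q.length ∧ p <+: q
            then f (q[p.length]'h.1) q else Classical.arbitrary X) p q →
          ∃ (h1 : p.length < q.length),
            (p ++ [q[p.length]]) <+: q ∧
            ConsAfter pl (f (q[p.length]'h1)) (p ++ [q[p.length]'h1]) q := by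
        intro q hpre hne hca
        have hlt := lt_length_of_prefix_ne hpre hne
        have hpre2 := prefix_snoc_of_prefix_lt hpre hlt
        refine ⟨hlt, hpre2, ?_⟩
        intro k hk hle ht'
        have hlen : (p ++ [q[p.length]]).length = p.length + 1 := by simp
        rw [hlen] at hle
        have e := hca k hk (by omega) ht'
        have hlt' : p.length < (q.take k).length := by
          simp [List.length_take]; omega
        have hpre' : p <+: q.take k := by
          rw [List.prefix_iff_eq_take, List.take_take,
            min_eq_left (by omega : p.length ≤ k)]
          exact List.prefix_iff_eq_take.1 hpre
        rw [e, hσ (q.take k) hlt' hpre']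
        congr 1
        rw [List.getElem_take]
    · -- W1
      intro q hq hpre hnterm hturn hca
      by_cases hqp : q = p
      · subst hqp
        exact absurd hturn (turn_not.1 ht)
      · obtain ⟨h1, hpre2, hca2⟩ := key q hpre hqp hca
        have hcmem : p ++ [q[p.length]] ∈ T := hT.2 hq hpre2
        have hres := (hf (q[p.length]'h1) hcmem).1 q hq hpre2 hnterm hturn hca2
        rw [hσ q h1 hpre]
        exact hres
    · -- W2
      intro q hterm hpre hca
      obtain ⟨a0, ha0⟩ := hne
      have hqp : q ≠ p := by
        intro hEq; subst hEq; exact hterm.2 a0 ha0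
      obtain ⟨h1, hpre2, hca2⟩ := key q hpre hqp hca
      have hcmem : p ++ [q[p.length]] ∈ T := hT.2 hterm.1 hpre2
      exact (hf (q[p.length]'h1) hcmem).2.1 q hterm hpre2 hca2
    · -- W3
      intro x hx hpfx hbc
      set a := x p.length with ha_def
      have hc : p ++ [a] ∈ T := by
        have h1 := hx (p.length + 1)
        rwa [prefixFn_succ, hpfx] at h1
      apply (hf a hc).2.2 x hx
      · have : (p ++ [a]).length = p.length + 1 := by simp
        rw [this, prefixFn_succ, hpfx]
      · intro k hle hturn
        have hlen : (p ++ [a]).length = p.length + 1 := by simp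
        rw [hlen] at hle
        have e := hbc k (by omega) hturn
        have hlt' : p.length < (prefixFn x k).length := by
          rw [prefixFn_length]; omega
        have hpre' : p <+: prefixFn x k := by
          rw [List.prefix_iff_eq_take, prefixFn_take x (by omega : p.length ≤ k), hpfx]
        have hget : (prefixFn x k)[p.length]'hlt' = a :=
          prefixFn_getElem x hlt'
        rw [e, hσ (prefixFn x k) hlt' hpre', hget]

/-- Globalization of `WinFrom` at the root. -/
theorem Forces.wins [Nonempty X] {T tab : Set (List X)} {pl : Bool}
    (hT : IsGameTree T) (htab : ∀ q ∈ tab, IsTerminal T q)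
    (h : Forces T tab pl []) :
    ∃ σ, IsStrategy T pl σ ∧ (∀ p, IsTerminal T p → PosConsistent pl σ p → p ∈ tab) ∧
      (∀ x ∈ body T, BranchConsistent pl σ x → False) := by
  obtain ⟨σ, W1, W2, W3⟩ := h.winFrom hT htab
  have hconv : ∀ q, PosConsistent pl σ q → ConsAfter pl σ [] q := by
    intro q hq k hk _ ht
    exact posConsistent_iff.1 hq k hk ht
  refine ⟨σ, ?_, ?_, ?_⟩
  · intro q hq hnterm hturn hcons
    exact W1 q hq List.nil_prefix hnterm hturn (hconv q hcons)
  · intro q hterm hcons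
    exact W2 q hterm List.nil_prefix (hconv q hcons)
  · intro x hx hbc
    exact W3 x hx (prefixFn_zero x) (fun k _ ht => hbc k ht)

/-- Transfer of a strategy on the pruned subtree `T₂` to the full taboo game. -/
theorem transfer [Nonempty X] {T T₂ tab : Set (List X)} {pl : Bool} {σ₂ : List X → X}
    (hT : IsGameTree T)
    (htab : ∀ q ∈ tab, IsTerminal T q)
    (hsub : T₂ ⊆ T)
    (hpc : ∀ p ∈ T₂, ∀ n, p.take n ∈ T₂)
    (hroot : [] ∈ T₂)
    (hnt : ∀ p ∈ T₂, ¬ IsTerminal T p)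
    (hpr2 : ∀ p ∈ T₂, ¬ IsTerminal T₂ p)
    (hdev : ∀ s ∈ T₂, ∀ a : X, Turn (!pl) s.length → s ++ [a] ∈ T → s ++ [a] ∉ T₂ →
      Forces T tab pl (s ++ [a]))
    (hstr : IsStrategy T₂ pl σ₂) :
    ∃ σ, IsStrategy T pl σ ∧ (∀ p, IsTerminal T p → PosConsistent pl σ p → p ∈ tab) ∧
      (∀ x ∈ body T, BranchConsistent pl σ x →
        (∀ n, prefixFn x n ∈ T₂) ∧ BranchConsistent pl σ₂ x) := by
  classical
  have hWF0 : ∀ r : List X, ∃ σr, Forces T tab pl r → WinFrom T tab pl r σr := by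
    intro r
    by_cases hr : Forces T tab pl r
    · obtain ⟨σr, hσr⟩ := hr.winFrom hT htab
      exact ⟨σr, fun _ => hσr⟩
    · exact ⟨fun _ => Classical.arbitrary X, fun h' => absurd h' hr⟩
  choose WF hWF using hWF0
  set σ : List X → X := fun q =>
    if h : ∃ n, q.take n ∉ T₂ then WF (q.take (Nat.find h)) q else σ₂ q with hσdef
  have hσ₂ : ∀ q ∈ T₂, σ q = σ₂ q := by
    intro q hq
    have hno : ¬ ∃ n, q.take n ∉ T₂ := by
      push_neg
      exact fun n => hpc q hq n
    simp only [hσdef]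
    rw [dif_neg hno]
  have hσWF : ∀ q m, q.take m ∉ T₂ → (∀ k < m, q.take k ∈ T₂) →
      σ q = WF (q.take m) q := by
    intro q m h1 h2
    have hex : ∃ n, q.take n ∉ T₂ := ⟨m, h1⟩
    have hfind : Nat.find hex = m :=
      (Nat.find_eq_iff hex).2 ⟨h1, fun n hn => not_not_intro (h2 n hn)⟩
    simp only [hσdef]
    rw [dif_pos hex, hfind]
  have hcons₂ : ∀ q ∈ T₂, PosConsistent pl σ q → PosConsistent pl σ₂ q := by
    intro q hq hc
    rw [posConsistent_iff] at hc ⊢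
    intro k hk ht
    rw [hc k hk ht, hσ₂ (q.take k) (hpc q hq k)]
  have PD : ∀ q, q ∈ T → PosConsistent pl σ q → q ∉ T₂ →
      ∃ m, m ≤ q.length ∧ q.take m ∉ T₂ ∧ (∀ k < m, q.take k ∈ T₂) ∧
        Forces T tab pl (q.take m) ∧ ConsAfter pl (WF (q.take m)) (q.take m) q ∧
        σ q = WF (q.take m) q := by
    intro q hq hcons hq2
    rw [posConsistent_iff] at hcons
    have hex : ∃ n, q.take n ∉ T₂ := ⟨q.length, by rwa [List.take_length]⟩
    set m := Nat.find hex with hm_def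
    have hm : q.take m ∉ T₂ := Nat.find_spec hex
    have hmin : ∀ k < m, q.take k ∈ T₂ := fun k hk => not_not.1 (Nat.find_min hex hk)
    have hmle : m ≤ q.length := by
      by_contra hcon
      push_neg at hcon
      have := hmin q.length hcon
      rw [List.take_length] at this
      exact hq2 this
    have hm0 : 0 < m := by
      rcases Nat.eq_zero_or_pos m with h0 | h0
      · exfalso; apply hm; rw [h0]; simpa using hroot
      · exact h0
    have hs2 : q.take (m - 1) ∈ T₂ := hmin _ (by omega)
    have hm1lt : m - 1 < q.length := by omega
    have hlen_s : (q.take (m - 1)).length = m - 1 := by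
      simp [List.length_take]; omega
    have hsr : q.take m = q.take (m - 1) ++ [q[m - 1]] := by
      conv_lhs => rw [show m = (m - 1) + 1 by omega]
      rw [List.take_succ, List.getElem?_eq_getElem hm1lt]
      rfl
    have hrT : q.take m ∈ T := take_mem_of_tree hT hq m
    have hconsTake : ∀ j, PosConsistent pl σ (q.take j) := by
      intro j
      rw [posConsistent_iff]
      intro k hk ht
      have hkj : k < j ∧ k < q.length := by
        simp [List.length_take] at hk; omega
      have e := hcons k hkj.2 ht
      rw [List.take_take, min_eq_left (by omega : k ≤ j)]
      rw [List.getElem_take]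
      exact e
    have hturn : Turn (!pl) (m - 1) := by
      rcases turn_em pl (m - 1) with htp | htp
      · exfalso
        have e := hcons (m - 1) hm1lt htp
        have hstep := hstr (q.take (m - 1)) hs2 (hpr2 _ hs2)
          (by rw [hlen_s]; exact htp)
          (hcons₂ _ hs2 (hconsTake (m - 1)))
        rw [hσ₂ _ hs2] at e
        rw [← e] at hstep
        rw [← hsr] at hstep
        exact hm hstep
      · exact htp
    have hforces : Forces T tab pl (q.take m) := by
      rw [hsr]
      exact hdev (q.take (m - 1)) hs2 q[m - 1] (by rwa [hlen_s])
        (by rw [← hsr]; exact hrT) (by rw [← hsr]; exact hm)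
    have hrlen : (q.take m).length = m := by
      simp [List.length_take]; omega
    refine ⟨m, hmle, hm, hmin, hforces, ?_, hσWF q m hm hmin⟩
    intro k hk hle ht
    rw [hrlen] at hle
    have e := hcons k hk ht
    have h1 : (q.take k).take m ∉ T₂ := by
      rw [List.take_take, min_eq_left hle]
      exact hm
    have h2 : ∀ j < m, (q.take k).take j ∈ T₂ := by
      intro j hj
      rw [List.take_take, min_eq_left (by omega : j ≤ k)]
      exact hmin j hj
    have e2 := hσWF (q.take k) m h1 h2
    rw [List.take_take, min_eq_left hle] at e2
    rw [e, e2]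
  refine ⟨σ, ?_, ?_, ?_⟩
  · -- IsStrategy
    intro q hq hnterm hturn hcons
    by_cases hq2 : q ∈ T₂
    · have hstep := hstr q hq2 (hpr2 q hq2) hturn (hcons₂ q hq2 hcons)
      rw [hσ₂ q hq2]
      exact hsub hstep
    · obtain ⟨m, _, _, _, hforces, hca, hval⟩ := PD q hq hcons hq2
      have hres := (hWF _ hforces).1 q hq (List.take_prefix _ _) hnterm hturn hca
      rw [hval]
      exact hres
  · -- terminal positions
    intro q hterm hcons
    by_cases hq2 : q ∈ T₂
    · exact absurd hterm (hnt q hq2)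
    · obtain ⟨m, _, _, _, hforces, hca, _⟩ := PD q hterm.1 hcons hq2
      exact (hWF _ hforces).2.1 q hterm (List.take_prefix _ _) hca
  · -- branches
    intro x hx hbc
    by_cases hall : ∀ n, prefixFn x n ∈ T₂
    · refine ⟨hall, ?_⟩
      intro k ht
      rw [hbc k ht, hσ₂ _ (hall k)]
    · exfalso
      push_neg at hall
      have hex : ∃ n, prefixFn x n ∉ T₂ := hall
      set n₀ := Nat.find hex with hn₀_def
      have hn₀ : prefixFn x n₀ ∉ T₂ := Nat.find_spec hex
      have hn₀min : ∀ k < n₀, prefixFn x k ∈ T₂ :=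
        fun k hk => not_not.1 (Nat.find_min hex hk)
      have hq : prefixFn x n₀ ∈ T := hx n₀
      have hqlen : (prefixFn x n₀).length = n₀ := prefixFn_length x n₀
      have hqtake : ∀ j ≤ n₀, (prefixFn x n₀).take j = prefixFn x j :=
        fun j hj => prefixFn_take x hj
      have hqcons : PosConsistent pl σ (prefixFn x n₀) := by
        rw [posConsistent_iff]
        intro k hk ht
        rw [hqlen] at hk
        rw [prefixFn_getElem x (by rwa [hqlen]), hqtake k (by omega)]
        exact hbc k ht
      obtain ⟨m, hmle, hm, _, hforces, _, _⟩ := PD _ hq hqcons hn₀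
      rw [hqlen] at hmle
      have hmn : m = n₀ := by
        rcases lt_or_ge m n₀ with hlt | hge
        · exfalso
          apply hm
          rw [hqtake m (by omega)]
          exact hn₀min m hlt
        · omega
      rw [hmn] at hforces
      have hrq : (prefixFn x n₀).take n₀ = prefixFn x n₀ := by
        rw [hqtake n₀ le_rfl]
      rw [hrq] at hforces
      apply (hWF _ hforces).2.2 x hx
      · rw [hqlen]
      · intro k hle ht
        rw [hqlen] at hle
        have h1 : (prefixFn x k).take n₀ ∉ T₂ := by
          rw [prefixFn_take x hle]
          exact hn₀
        have h2 : ∀ j < n₀, (prefixFn x k).take j ∈ T₂ := by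
          intro j hj
          rw [prefixFn_take x (by omega : j ≤ k)]
          exact hn₀min j hj
        have e2 := hσWF (prefixFn x k) n₀ h1 h2
        rw [prefixFn_take x hle] at e2
        rw [hbc k ht, e2]

end AuxDev

/-- determinacy of games with taboos is level-by-level equivalent to
determinacy on pruned trees: if for every pruned game tree `T'` and every payoff in the
class `Γ` (relativized to `[T']`) the ordinary game is determined, then every game
with taboos whose payoff is in `Γ` (relativized to `[T]`) is determined. -/
theorem stmt2 {X : Type*} [Nonempty X] (Γ : Set (Set (ℕ → X)))
    (h : ∀ T' : Set (List X), IsGameTree T' → IsPruned T' →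
      ∀ G ∈ Γ, DeterminedOn T' ∅ ∅ (G ∩ body T'))
    (M : TabooTree X) (G : Set (ℕ → X)) (hG : G ∈ Γ) :
    Determined M (G ∩ body M.T) := by
  classical
  show (∃ σ, WinsI M.T M.tabooII (G ∩ body M.T) σ) ∨
    (∃ τ, WinsII M.T M.tabooI (G ∩ body M.T) τ)
  by_cases hFI : Forces M.T M.tabooII true []
  · left
    obtain ⟨σ, h1, h2, h3⟩ := hFI.wins M.isTree M.tabooII_terminal
    exact ⟨σ, h1, h2, fun x hx hc => (h3 x hx hc).elim⟩
  by_cases hFII : Forces M.T M.tabooI false []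
  · right
    obtain ⟨τ, h1, h2, h3⟩ := hFII.wins M.isTree M.tabooI_terminal
    exact ⟨τ, h1, h2, fun x hx hc => (h3 x hx hc).elim⟩
  -- the doubly-pruned subtree
  set T₂ : Set (List X) := {p | p ∈ M.T ∧ ∀ r, r <+: p →
    ¬ Forces M.T M.tabooII true r ∧ ¬ Forces M.T M.tabooI false r} with hT₂def
  have hsub : T₂ ⊆ M.T := fun p hp => hp.1
  have hroot : [] ∈ T₂ := by
    refine ⟨nil_mem_of_tree M.isTree, ?_⟩
    intro r hr
    rw [List.prefix_nil] at hr
    subst hr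
    exact ⟨hFI, hFII⟩
  have hpc : ∀ p ∈ T₂, ∀ n, p.take n ∈ T₂ := by
    intro p hp n
    exact ⟨take_mem_of_tree M.isTree hp.1 n,
      fun r hr => hp.2 r (hr.trans (List.take_prefix n p))⟩
  have htree₂ : IsGameTree T₂ := by
    refine ⟨⟨[], hroot⟩, ?_⟩
    intro p q hq hpq
    have := hpc q hq p.length
    rwa [← List.prefix_iff_eq_take.1 hpq] at this
  have hnt : ∀ p ∈ T₂, ¬ IsTerminal M.T p := by
    intro p hp hterm
    rcases M.taboo_cover p hterm with hmem | hmem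
    · exact (hp.2 p (List.prefix_refl p)).2 (Forces.base hmem)
    · exact (hp.2 p (List.prefix_refl p)).1 (Forces.base hmem)
  have hpruned : IsPruned T₂ := by
    intro p hp
    have hterm := hnt p hp
    have hne : ∃ a, p ++ [a] ∈ M.T := by
      by_contra hcon
      push_neg at hcon
      exact hterm ⟨hp.1, hcon⟩
    have hnI : ¬ Forces M.T M.tabooII true p := (hp.2 p (List.prefix_refl p)).1
    have hnII : ¬ Forces M.T M.tabooI false p := (hp.2 p (List.prefix_refl p)).2
    rcases Nat.even_or_odd p.length with he | ho
    · have hTurn : Turn true p.length := by simpa [Turn] using he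
      have h1 : ∀ a, p ++ [a] ∈ M.T → ¬ Forces M.T M.tabooII true (p ++ [a]) :=
        fun a ha hf => hnI (Forces.mine hp.1 hTurn ha hf)
      have h2 : ∃ a, p ++ [a] ∈ M.T ∧ ¬ Forces M.T M.tabooI false (p ++ [a]) := by
        by_contra hcon
        push_neg at hcon
        exact hnII (Forces.yours hp.1 (by simpa [Turn] using he) hne hcon)
      obtain ⟨a, ha, h3⟩ := h2
      refine ⟨a, ha, ?_⟩
      intro r hr
      rcases List.prefix_concat_iff.1 hr with hr' | hr'
      · subst hr'
        exact ⟨h1 a ha, h3⟩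
      · exact hp.2 r hr'
    · have hTurn : Turn false p.length := by simpa [Turn] using ho
      have h1 : ∀ a, p ++ [a] ∈ M.T → ¬ Forces M.T M.tabooI false (p ++ [a]) :=
        fun a ha hf => hnII (Forces.mine hp.1 hTurn ha hf)
      have h2 : ∃ a, p ++ [a] ∈ M.T ∧ ¬ Forces M.T M.tabooII true (p ++ [a]) := by
        by_contra hcon
        push_neg at hcon
        exact hnI (Forces.yours hp.1 (by simpa [Turn] using ho) hne hcon)
      obtain ⟨a, ha, h3⟩ := h2
      refine ⟨a, ha, ?_⟩
      intro r hr
      rcases List.prefix_concat_iff.1 hr with hr' | hr'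
      · subst hr'
        exact ⟨h3, h1 a ha⟩
      · exact hp.2 r hr'
  have hpr2 : ∀ p ∈ T₂, ¬ IsTerminal T₂ p := by
    intro p hp ht
    obtain ⟨a, ha⟩ := hpruned p hp
    exact ht.2 a ha
  rcases h T₂ htree₂ hpruned G hG with ⟨σ₂, hσ₂⟩ | ⟨τ₂, hτ₂⟩
  · left
    obtain ⟨hstr₂, _, hwin₂⟩ := hσ₂
    have hdev : ∀ s ∈ T₂, ∀ a : X, Turn (!true) s.length → s ++ [a] ∈ M.T →
        s ++ [a] ∉ T₂ → Forces M.T M.tabooII true (s ++ [a]) := by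
      intro s hs a hturn ha hnot
      have h1 : ¬ ∀ r, r <+: s ++ [a] →
          ¬ Forces M.T M.tabooII true r ∧ ¬ Forces M.T M.tabooI false r :=
        fun hcon => hnot ⟨ha, hcon⟩
      push_neg at h1
      obtain ⟨r, hr, hror⟩ := h1
      rcases List.prefix_concat_iff.1 hr with hr' | hr'
      · subst hr'
        rcases or_iff_not_imp_left.2 hror with hf | hf
        · exact hf
        · exfalso
          exact (hs.2 s (List.prefix_refl s)).2 (Forces.mine hs.1 hturn ha hf)
      · exfalso
        rcases or_iff_not_imp_left.2 hror with hf | hf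
        · exact (hs.2 r hr').1 hf
        · exact (hs.2 r hr').2 hf
    obtain ⟨σ, h1, h2, h3⟩ := transfer M.isTree M.tabooII_terminal hsub hpc hroot
      hnt hpr2 hdev hstr₂
    refine ⟨σ, h1, h2, ?_⟩
    intro x hx hc
    obtain ⟨hbody₂, hc₂⟩ := h3 x hx hc
    have := hwin₂ x hbody₂ hc₂
    exact ⟨this.1, hx⟩
  · right
    obtain ⟨hstr₂, _, hwin₂⟩ := hτ₂
    have hdev : ∀ s ∈ T₂, ∀ a : X, Turn (!false) s.length → s ++ [a] ∈ M.T →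
        s ++ [a] ∉ T₂ → Forces M.T M.tabooI false (s ++ [a]) := by
      intro s hs a hturn ha hnot
      have h1 : ¬ ∀ r, r <+: s ++ [a] →
          ¬ Forces M.T M.tabooII true r ∧ ¬ Forces M.T M.tabooI false r :=
        fun hcon => hnot ⟨ha, hcon⟩
      push_neg at h1
      obtain ⟨r, hr, hror⟩ := h1
      rcases List.prefix_concat_iff.1 hr with hr' | hr'
      · subst hr'
        rcases or_iff_not_imp_left.2 hror with hf | hf
        · exfalso
          exact (hs.2 s (List.prefix_refl s)).1 (Forces.mine hs.1 hturn ha hf)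
        · exact hf
      · exfalso
        rcases or_iff_not_imp_left.2 hror with hf | hf
        · exact (hs.2 r hr').1 hf
        · exact (hs.2 r hr').2 hf
    obtain ⟨τ, h1, h2, h3⟩ := transfer M.isTree M.tabooI_terminal hsub hpc hroot
      hnt hpr2 hdev hstr₂
    refine ⟨τ, h1, h2, ?_⟩
    intro x hx hc hxG
    obtain ⟨hbody₂, hc₂⟩ := h3 x hx hc
    exact hwin₂ x hbody₂ hc₂ ⟨hxG.1, hbody₂⟩
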